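/- arXiv:1709.06329 — 2 statements merged into one kernel-verified Lean document; each statement's English description precedes it below -/
import Mathlib

section
/- For all 1 ≤ m, n ≤ N with m ≠ n, the matrices L_m, R_m, K_m ∈ Mat_P(ℂ) satisfy: L_m K_n = K_n L_m, R_m K_n = K_n R_m, q·L_m K_m = K_m L_m, and R_m K_m = q·K_m R_m. -/
/-- The `m`-th coordinate of the location of the subspace `y` with respect to the
flag `x`: `dim(y ⊓ x_m) − dim(y ⊓ x_{m−1})`. -/
noncomputable def loc {F H : Type*} [Field F] [AddCommGroup H] [Module F H] {N : ℕ}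
    (x : Fin (N + 1) → Submodule F H) (y : Submodule F H) (m : Fin N) : ℕ :=
  Module.finrank F ↥(y ⊓ x m.succ) - Module.finrank F ↥(y ⊓ x m.castSucc)

/-- `y` covers `z` in the subspace lattice. -/
def Covers {F H : Type*} [Field F] [AddCommGroup H] [Module F H]
    (y z : Submodule F H) : Prop :=
  z ≤ y ∧ Module.finrank F ↥z + 1 = Module.finrank F ↥y

/-- `y` `m`-covers `z`: `y` covers `z` and the location of `y` is the location of `z`
plus the tuple with a `1` in coordinate `m` and `0` elsewhere. -/
def MCovers {F H : Type*} [Field F] [AddCommGroup H] [Module F H] {N : ℕ}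
    (x : Fin (N + 1) → Submodule F H) (m : Fin N) (y z : Submodule F H) : Prop :=
  Covers y z ∧ ∀ i, loc x y i = loc x z i + if i = m then 1 else 0

open Classical in
/-- The lowering matrix `L_m`: `(L_m)_{y,z} = 1` if `z` `m`-covers `y`, else `0`. -/
noncomputable def Lmat {F H : Type*} [Field F] [AddCommGroup H] [Module F H] {N : ℕ}
    (x : Fin (N + 1) → Submodule F H) (m : Fin N) :
    Matrix (Submodule F H) (Submodule F H) ℂ :=
  Matrix.of fun y z => if MCovers x m z y then 1 else 0

open Classical in
/-- The raising matrix `R_m`: `(R_m)_{y,z} = 1` if `y` `m`-covers `z`, else `0`. -/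
noncomputable def Rmat {F H : Type*} [Field F] [AddCommGroup H] [Module F H] {N : ℕ}
    (x : Fin (N + 1) → Submodule F H) (m : Fin N) :
    Matrix (Submodule F H) (Submodule F H) ℂ :=
  Matrix.of fun y z => if MCovers x m y z then 1 else 0

open Classical in
/-- The diagonal matrix `K_m` with `(y,y)`-entry `q^{1/2 − μ_m}` for `y ∈ P_μ`. -/
noncomputable def Kmat {F H : Type*} [Field F] [AddCommGroup H] [Module F H] {N : ℕ}
    (x : Fin (N + 1) → Submodule F H) (m : Fin N) (q : ℕ) :
    Matrix (Submodule F H) (Submodule F H) ℂ :=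
  Matrix.diagonal fun y => (q : ℂ) ^ ((1 : ℂ) / 2 - (loc x y m : ℂ))

/-- For `m ≠ n`: `L_m K_n = K_n L_m`, `R_m K_n = K_n R_m`, `q L_m K_m = K_m L_m`,
and `R_m K_m = q K_m R_m`. -/
theorem stmt16 {F : Type*} [Field F] [Fintype F] {H : Type*} [AddCommGroup H] [Module F H]
    [FiniteDimensional F H] [Fintype (Submodule F H)] {N : ℕ}
    (hN : 1 ≤ N) (hdim : Module.finrank F H = N)
    (x : Fin (N + 1) → Submodule F H) (hrank : ∀ i, Module.finrank F ↥(x i) = (i : ℕ))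
    (hmono : StrictMono x) (m n : Fin N) (hmn : m ≠ n) :
    Lmat x m * Kmat x n (Fintype.card F) = Kmat x n (Fintype.card F) * Lmat x m ∧
      Rmat x m * Kmat x n (Fintype.card F) = Kmat x n (Fintype.card F) * Rmat x m ∧
      (Fintype.card F : ℂ) • (Lmat x m * Kmat x m (Fintype.card F)) =
        Kmat x m (Fintype.card F) * Lmat x m ∧
      Rmat x m * Kmat x m (Fintype.card F) =
        (Fintype.card F : ℂ) • (Kmat x m (Fintype.card F) * Rmat x m) := by
  classical
  have hq : (Fintype.card F : ℂ) ≠ 0 := Nat.cast_ne_zero.mpr Fintype.card_ne_zero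
  set q := ((Fintype.card F : ℕ) : ℂ) with hqdef
  have key : ∀ a b : Submodule F H, MCovers x m a b →
      q ^ ((1 : ℂ) / 2 - (loc x a m : ℂ)) * q = q ^ ((1 : ℂ) / 2 - (loc x b m : ℂ)) := by
    intro a b h
    have hm := h.2 m
    rw [if_pos rfl] at hm
    have : ((loc x a m : ℂ)) = (loc x b m : ℂ) + 1 := by push_cast [hm]; ring
    rw [this, show (1 : ℂ) / 2 - ((loc x b m : ℂ) + 1) = ((1 : ℂ) / 2 - (loc x b m : ℂ)) - 1 by ring,
      Complex.cpow_sub _ _ hq, Complex.cpow_one]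
    field_simp
  refine ⟨?_, ?_, ?_, ?_⟩
  · ext y z
    simp only [Lmat, Kmat, Matrix.mul_diagonal, Matrix.diagonal_mul, Matrix.of_apply]
    by_cases h : MCovers x m z y
    · have hn := h.2 n
      rw [if_neg (Ne.symm hmn)] at hn
      simp [h, hn]
    · simp [h]
  · ext y z
    simp only [Rmat, Kmat, Matrix.mul_diagonal, Matrix.diagonal_mul, Matrix.of_apply]
    by_cases h : MCovers x m y z
    · have hn := h.2 n
      rw [if_neg (Ne.symm hmn)] at hn
      simp [h, hn]
    · simp [h]
  · ext y z
    simp only [Matrix.smul_apply, Lmat, Kmat, Matrix.mul_diagonal, Matrix.diagonal_mul,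
      Matrix.of_apply, smul_eq_mul]
    by_cases h : MCovers x m z y
    · have := key z y h
      simp only [h, if_true, mul_one, one_mul]
      rw [← this]; ring
    · simp [h]
  · ext y z
    simp only [Matrix.smul_apply, Rmat, Kmat, Matrix.mul_diagonal, Matrix.diagonal_mul,
      Matrix.of_apply, smul_eq_mul]
    by_cases h : MCovers x m y z
    · have := key y z h
      simp only [h, if_true, mul_one, one_mul]
      rw [← this]; ring
    · simp [h]
end

section
/- For all 1 ≤ m, n ≤ N, the matrices L_m, R_m ∈ Mat_P(ℂ) satisfy: L_m² = R_m² = 0; q·L_m L_n = L_n L_m whenever m < n; R_m R_n = q·R_n R_m whenever m < n; and L_m R_n = R_n L_m whenever m ≠ n. -/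
namespace Stmt17Aux

open Module Submodule

variable {F : Type*} [Field F] {H : Type*} [AddCommGroup H] [Module F H]
  [FiniteDimensional F H] {N : ℕ}

/-- `D x y i = dim (y ⊓ x i)`. -/
noncomputable def D (x : Fin (N+1) → Submodule F H) (y : Submodule F H) (i : Fin (N+1)) : ℕ :=
  finrank F ↥(y ⊓ x i)

/-- indicator `[m.castSucc < i]`. -/
def ind {N : ℕ} (m : Fin N) (i : Fin (N+1)) : ℕ := if m.castSucc < i then 1 else 0

lemma ind_succ {N : ℕ} (m i : Fin N) :
    ind m i.succ = ind m i.castSucc + (if i = m then 1 else 0) := by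
  simp only [ind, Fin.lt_def, Fin.coe_castSucc, Fin.val_succ, Fin.ext_iff]
  split_ifs <;> omega

lemma ind_self_succ {N : ℕ} (m : Fin N) : ind m m.succ = 1 := by
  simp [ind, Fin.castSucc_lt_succ_iff]

lemma ind_succ_of_not_le {N : ℕ} {m k : Fin N} (h : ¬ m ≤ k) : ind m k.succ = 0 := by
  simp only [ind, Fin.castSucc_lt_succ_iff]
  exact if_neg h

variable (x : Fin (N+1) → Submodule F H)

lemma D_le_of_le {y z : Submodule F H} (hle : z ≤ y) (i : Fin (N+1)) :
    D x z i ≤ D x y i :=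
  Submodule.finrank_mono (inf_le_inf_right _ hle)

variable (hmono : StrictMono x)
include hmono

lemma D_mono (y : Submodule F H) (m : Fin N) : D x y m.castSucc ≤ D x y m.succ :=
  Submodule.finrank_mono (inf_le_inf_left _ (hmono (Fin.castSucc_lt_succ : m.castSucc < m.succ)).le)

lemma loc_add (y : Submodule F H) (m : Fin N) :
    loc x y m + D x y m.castSucc = D x y m.succ :=
  Nat.sub_add_cancel (D_mono x hmono y m)

variable (hrank : ∀ i, finrank F ↥(x i) = (i : ℕ))
include hrank

lemma D_step (y : Submodule F H) (m : Fin N) : D x y m.succ ≤ D x y m.castSucc + 1 := by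
  have h := Submodule.finrank_sup_add_finrank_inf_eq (y ⊓ x m.succ) (x m.castSucc)
  have h1 : y ⊓ x m.succ ⊓ x m.castSucc = y ⊓ x m.castSucc := by
    rw [inf_assoc, inf_eq_right.2 (hmono (Fin.castSucc_lt_succ : m.castSucc < m.succ)).le]
  have h2 : finrank F ↥(y ⊓ x m.succ ⊔ x m.castSucc) ≤ finrank F ↥(x m.succ) :=
    Submodule.finrank_mono (sup_le inf_le_right (hmono (Fin.castSucc_lt_succ : m.castSucc < m.succ)).le)
  have h3 := hrank m.succ
  have h4 := hrank m.castSucc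
  simp only [Fin.val_succ, Fin.coe_castSucc] at h3 h4
  rw [h1] at h
  simp only [D]
  omega

lemma loc_le_one (y : Submodule F H) (m : Fin N) : loc x y m ≤ 1 := by
  have h1 := loc_add x hmono y m
  have h2 := D_step x hmono hrank y m
  omega

lemma x_zero : x 0 = ⊥ := by
  rw [← Submodule.finrank_eq_zero (S := x 0)]
  simpa using hrank 0

lemma D_zero (y : Submodule F H) : D x y 0 = 0 := by
  rw [D, x_zero x hmono hrank, inf_bot_eq, finrank_bot]

lemma mcovers_iff {m : Fin N} {y z : Submodule F H} :
    MCovers x m y z ↔ z ≤ y ∧ finrank F ↥z + 1 = finrank F ↥y ∧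
      ∀ i, D x y i = D x z i + ind m i := by
  constructor
  · rintro ⟨⟨hle, hfr⟩, hloc⟩
    refine ⟨hle, hfr, ?_⟩
    intro i
    induction i using Fin.induction with
    | zero => simp [D_zero x hmono hrank, ind]
    | succ i ih =>
      calc D x y i.succ = loc x y i + D x y i.castSucc := (loc_add x hmono y i).symm
        _ = (loc x z i + (if i = m then 1 else 0)) + (D x z i.castSucc + ind m i.castSucc) := by
            rw [hloc i, ih]
        _ = (loc x z i + D x z i.castSucc) + (ind m i.castSucc + (if i = m then 1 else 0)) := by
            ring
        _ = D x z i.succ + ind m i.succ := by rw [loc_add x hmono, ind_succ]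
  · rintro ⟨hle, hfr, hD⟩
    refine ⟨⟨hle, hfr⟩, fun i => ?_⟩
    have h1 := loc_add x hmono y i
    have h2 := loc_add x hmono z i
    have h3 := hD i.castSucc
    have h4 := hD i.succ
    have h5 := ind_succ m i
    omega

lemma D_cover_le {y z : Submodule F H} (hle : z ≤ y)
    (hfr : finrank F ↥z + 1 = finrank F ↥y) (i : Fin (N+1)) :
    D x y i ≤ D x z i + 1 := by
  have h := Submodule.finrank_sup_add_finrank_inf_eq (y ⊓ x i) z
  have h1 : y ⊓ x i ⊓ z = z ⊓ x i := by
    rw [inf_right_comm, inf_eq_right.2 hle]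
  have h2 : finrank F ↥(y ⊓ x i ⊔ z) ≤ finrank F ↥y :=
    Submodule.finrank_mono (sup_le inf_le_left hle)
  rw [h1] at h
  simp only [D]
  omega

omit hrank in
lemma D_persist {y z : Submodule F H} (hle : z ≤ y) (i : Fin N)
    (h : D x y i.castSucc = D x z i.castSucc + 1) :
    D x z i.succ < D x y i.succ := by
  have hlt : z ⊓ x i.castSucc < y ⊓ x i.castSucc := by
    refine lt_of_le_of_ne (inf_le_inf_right _ hle) (fun he => ?_)
    rw [show D x y i.castSucc = D x z i.castSucc from by rw [D, D, he]] at h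
    omega
  obtain ⟨v, hv1, hv2⟩ := SetLike.exists_of_lt hlt
  have hv1' := Submodule.mem_inf.mp hv1
  have hlt2 : z ⊓ x i.succ < y ⊓ x i.succ := by
    refine lt_of_le_of_ne (inf_le_inf_right _ hle) (fun he => ?_)
    have hv3 : v ∈ y ⊓ x i.succ :=
      Submodule.mem_inf.mpr ⟨hv1'.1, (hmono (Fin.castSucc_lt_succ : i.castSucc < i.succ)).le hv1'.2⟩
    rw [← he] at hv3
    exact hv2 (Submodule.mem_inf.mpr ⟨(Submodule.mem_inf.mp hv3).1, hv1'.2⟩)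
  exact Submodule.finrank_lt_finrank_of_lt hlt2

variable (hdim : finrank F H = N)
include hdim

lemma x_last : x (Fin.last N) = ⊤ :=
  Submodule.eq_top_of_finrank_eq (by rw [hrank]; simp [hdim])

lemma D_last (y : Submodule F H) : D x y (Fin.last N) = finrank F ↥y := by
  rw [D, x_last x hmono hrank hdim, inf_top_eq]

lemma exists_type {y z : Submodule F H} (hle : z ≤ y)
    (hfr : finrank F ↥z + 1 = finrank F ↥y) :
    ∃ m : Fin N, ∀ i, D x y i = D x z i + ind m i := by
  classical
  have hP : ∃ k : ℕ, ∃ h : k < N + 1, D x y ⟨k, h⟩ = D x z ⟨k, h⟩ + 1 := by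
    refine ⟨N, Nat.lt_succ_self N, ?_⟩
    have hy := D_last x hmono hrank hdim y
    have hz := D_last x hmono hrank hdim z
    simp only [Fin.last] at hy hz
    omega
  obtain ⟨hk₀N, hk₀⟩ := Nat.find_spec hP
  set k₀ := Nat.find hP with hk₀def
  have hk₀pos : 0 < k₀ := by
    rcases Nat.eq_zero_or_pos k₀ with h0 | h0
    · exfalso
      have hfin : (⟨k₀, hk₀N⟩ : Fin (N+1)) = 0 := by apply Fin.ext; simp [h0]
      rw [hfin] at hk₀
      have hy0 := D_zero x hmono hrank y
      have hz0 := D_zero x hmono hrank z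
      omega
    · exact h0
  have hm : k₀ - 1 < N := by omega
  refine ⟨⟨k₀ - 1, hm⟩, fun i => ?_⟩
  have hind : ind (⟨k₀ - 1, hm⟩ : Fin N) i = if k₀ ≤ i.val then 1 else 0 := by
    simp only [ind, Fin.lt_def, Fin.coe_castSucc]
    congr 1
    simp only [eq_iff_iff]
    omega
  rw [hind]
  by_cases hc : k₀ ≤ i.val
  · rw [if_pos hc]
    have aux : ∀ d : ℕ, ∀ h : k₀ + d < N + 1,
        D x y ⟨k₀ + d, h⟩ = D x z ⟨k₀ + d, h⟩ + 1 := by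
      intro d
      induction d with
      | zero =>
        intro h
        have hfin : (⟨k₀ + 0, h⟩ : Fin (N+1)) = ⟨k₀, hk₀N⟩ := by apply Fin.ext; simp; try omega
        rw [hfin]
        exact hk₀
      | succ d ih =>
        intro h
        have hdN : k₀ + d < N := by omega
        have hgoal : (⟨k₀ + (d+1), h⟩ : Fin (N+1)) = (⟨k₀ + d, hdN⟩ : Fin N).succ := by
          apply Fin.ext; simp; try omega
        rw [hgoal]
        have hcst : (⟨k₀ + d, by omega⟩ : Fin (N+1)) = (⟨k₀ + d, hdN⟩ : Fin N).castSucc := by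
          apply Fin.ext; simp; try omega
        have h1 := ih (by omega)
        rw [hcst] at h1
        have h2 := D_persist x hmono hle (⟨k₀ + d, hdN⟩ : Fin N) h1
        have h3 := D_cover_le x hmono hrank hle hfr (⟨k₀ + d, hdN⟩ : Fin N).succ
        omega
    have haux := aux (i.val - k₀) (by omega)
    have hi : (⟨k₀ + (i.val - k₀), by omega⟩ : Fin (N+1)) = i := by
      apply Fin.ext; simp; omega
    rw [hi] at haux
    omega
  · rw [if_neg hc]
    have hmin := Nat.find_min hP (m := i.val) (by omega)
    push_neg at hmin
    have hne := hmin i.isLt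
    rw [Fin.eta] at hne
    have hb1 := D_le_of_le x hle i
    have hb2 := D_cover_le x hmono hrank hle hfr i
    omega


omit hmono hrank hdim in
lemma ind_inj {m n : Fin N} (h : ∀ i, ind m i = ind n i) : m = n := by
  have h1 := h m.succ
  have h2 := h n.succ
  simp only [ind, Fin.lt_def, Fin.coe_castSucc, Fin.val_succ] at h1 h2
  apply Fin.ext
  split_ifs at h1 h2 <;> omega

omit hmono hrank hdim in
lemma delta_lemma {a b m n : Fin N}
    (h : ∀ i, ind a i + ind m i = ind b i + ind n i) :
    (a = b ∧ m = n) ∨ (a = n ∧ m = b) := by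
  rcases eq_or_ne a b with rfl | hab
  · exact Or.inl ⟨rfl, ind_inj (fun i => by have := h i; omega)⟩
  rcases eq_or_ne m b with rfl | hmb
  · exact Or.inr ⟨ind_inj (fun i => by have := h i; omega), rfl⟩
  exfalso
  have h1 := h b.succ
  have h2 := h b.castSucc
  simp only [ind, Fin.lt_def, Fin.coe_castSucc, Fin.val_succ,
    Fin.castSucc_lt_castSucc_iff] at h1 h2
  have hab' : a.val ≠ b.val := fun hh => hab (Fin.ext hh)
  have hmb' : m.val ≠ b.val := fun hh => hmb (Fin.ext hh)
  split_ifs at h1 h2 <;> omega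

omit hmono hrank hdim in
lemma finrank_sup_span (u : Submodule F H) {g : H} (hg : g ∉ u) :
    finrank F ↥(u ⊔ span F {g}) = finrank F ↥u + 1 := by
  have hg0 : g ≠ 0 := fun h => hg (h ▸ u.zero_mem)
  have h := Submodule.finrank_sup_add_finrank_inf_eq u (span F {g})
  have h2 : u ⊓ span F {g} = ⊥ := by
    rw [eq_bot_iff]
    rintro v hv
    obtain ⟨hv1, hv2⟩ := Submodule.mem_inf.mp hv
    obtain ⟨c, rfl⟩ := Submodule.mem_span_singleton.mp hv2
    rcases eq_or_ne c 0 with rfl | hc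
    · simp
    · exfalso
      apply hg
      have := u.smul_mem c⁻¹ hv1
      rwa [smul_smul, inv_mul_cancel₀ hc, one_smul] at this
  rw [h2, finrank_bot, finrank_span_singleton hg0] at h
  omega

/-- The two-step interval condition. -/
def Core (m n : Fin N) (u v : Submodule F H) : Prop :=
  u ≤ v ∧ finrank F ↥u + 2 = finrank F ↥v ∧ ∀ i, D x v i = D x u i + ind m i + ind n i

omit hdim in
lemma chain_core {a b : Fin N} {u w v : Submodule F H}
    (h1 : MCovers x a w u) (h2 : MCovers x b v w) : Core x a b u v := by
  rw [mcovers_iff x hmono hrank] at h1 h2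
  refine ⟨h1.1.trans h2.1, by omega, fun i => ?_⟩
  have := h1.2.2 i
  have := h2.2.2 i
  omega

omit hmono hrank hdim in
lemma core_comm {m n : Fin N} {u v : Submodule F H} (hc : Core x m n u v) :
    Core x n m u v :=
  ⟨hc.1, hc.2.1, fun i => by have := hc.2.2 i; omega⟩

lemma core_unique {m n : Fin N} {u v : Submodule F H} (hmn : m < n) (hc : Core x m n u v) :
    ∃! w, MCovers x m w u ∧ MCovers x n v w := by
  obtain ⟨huv, hfr, hD⟩ := hc
  have hvm : D x v m.succ = D x u m.succ + 1 := by
    have := hD m.succ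
    rw [ind_self_succ, ind_succ_of_not_le (not_le.2 hmn)] at this
    omega
  have hinf : u ⊓ (v ⊓ x m.succ) = u ⊓ x m.succ := by
    rw [← inf_assoc, inf_eq_left.2 huv]
  have e1 : finrank F ↥(v ⊓ x m.succ) = D x v m.succ := rfl
  have e2 : finrank F ↥(u ⊓ x m.succ) = D x u m.succ := rfl
  have hfr₀ : finrank F ↥(u ⊔ v ⊓ x m.succ) = finrank F ↥u + 1 := by
    have h := Submodule.finrank_sup_add_finrank_inf_eq u (v ⊓ x m.succ)
    rw [hinf] at h
    omega
  have hw₀v : u ⊔ v ⊓ x m.succ ≤ v := sup_le huv inf_le_left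
  have hfrv : finrank F ↥(u ⊔ v ⊓ x m.succ) + 1 = finrank F ↥v := by omega
  obtain ⟨k, hk⟩ := exists_type x hmono hrank hdim (le_sup_left : u ≤ u ⊔ v ⊓ x m.succ)
    (by omega)
  obtain ⟨k', hk'⟩ := exists_type x hmono hrank hdim hw₀v hfrv
  have hdelta : ∀ i, ind k i + ind k' i = ind m i + ind n i := by
    intro i
    have := hk i; have := hk' i; have := hD i
    omega
  have hDw₀m : D x u m.succ < D x (u ⊔ v ⊓ x m.succ) m.succ := by
    have hle2 : v ⊓ x m.succ ≤ (u ⊔ v ⊓ x m.succ) ⊓ x m.succ :=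
      le_inf le_sup_right inf_le_right
    have e3 := Submodule.finrank_mono hle2
    have e4 : finrank F ↥((u ⊔ v ⊓ x m.succ) ⊓ x m.succ) = D x (u ⊔ v ⊓ x m.succ) m.succ := rfl
    omega
  have hkm : k = m ∧ k' = n := by
    rcases delta_lemma hdelta with ⟨h1, h2⟩ | ⟨h1, h2⟩
    · exact ⟨h1, h2⟩
    · exfalso
      have := hk m.succ
      rw [h1, ind_succ_of_not_le (not_le.2 hmn)] at this
      omega
  refine ⟨u ⊔ v ⊓ x m.succ, ⟨?_, ?_⟩, ?_⟩
  · exact (mcovers_iff x hmono hrank).mpr ⟨le_sup_left, by omega, hkm.1 ▸ hk⟩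
  · exact (mcovers_iff x hmono hrank).mpr ⟨hw₀v, hfrv, hkm.2 ▸ hk'⟩
  · rintro w ⟨hw1, hw2⟩
    rw [mcovers_iff x hmono hrank] at hw1 hw2
    have hDwm : D x w m.succ = D x u m.succ + 1 := by
      have := hw1.2.2 m.succ
      rw [ind_self_succ] at this
      omega
    have hvxw : v ⊓ x m.succ ≤ w := by
      have hle2 : w ⊓ x m.succ ≤ v ⊓ x m.succ := inf_le_inf_right _ hw2.1
      have heq : w ⊓ x m.succ = v ⊓ x m.succ := by
        apply Submodule.eq_of_le_of_finrank_le hle2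
        have e5 : finrank F ↥(w ⊓ x m.succ) = D x w m.succ := rfl
        omega
      rw [← heq]; exact inf_le_left
    have hw₀w : u ⊔ v ⊓ x m.succ ≤ w := sup_le hw1.1 hvxw
    exact (Submodule.eq_of_le_of_finrank_le hw₀w (by omega)).symm

lemma core_count {m n : Fin N} {u v : Submodule F H} (hmn : m < n) (hc : Core x m n u v) :
    ∃ f : F → Submodule F H,
      (∀ c, MCovers x n (f c) u ∧ MCovers x m v (f c)) ∧
      Function.Injective f ∧
      (∀ w, MCovers x n w u ∧ MCovers x m v w → ∃ c, f c = w) := by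
  obtain ⟨huv, hfr, hD⟩ := hc
  have hvm : D x v m.succ = D x u m.succ + 1 := by
    have := hD m.succ
    rw [ind_self_succ, ind_succ_of_not_le (not_le.2 hmn)] at this
    omega
  have e1 : finrank F ↥(v ⊓ x m.succ) = D x v m.succ := rfl
  have e2 : finrank F ↥(u ⊓ x m.succ) = D x u m.succ := rfl
  have hlt : u ⊓ x m.succ < v ⊓ x m.succ := by
    refine lt_of_le_of_ne (inf_le_inf_right _ huv) (fun he => ?_)
    rw [he] at e2
    omega
  obtain ⟨e, he1, he2⟩ := SetLike.exists_of_lt hlt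
  obtain ⟨hev, hex⟩ := Submodule.mem_inf.mp he1
  have heu : e ∉ u := fun h => he2 (Submodule.mem_inf.mpr ⟨h, hex⟩)
  have hinf : u ⊓ (v ⊓ x m.succ) = u ⊓ x m.succ := by
    rw [← inf_assoc, inf_eq_left.2 huv]
  have hfr₀ : finrank F ↥(u ⊔ v ⊓ x m.succ) = finrank F ↥u + 1 := by
    have h := Submodule.finrank_sup_add_finrank_inf_eq u (v ⊓ x m.succ)
    rw [hinf] at h
    omega
  have hltv : u ⊔ v ⊓ x m.succ < v := by
    refine lt_of_le_of_ne (sup_le huv inf_le_left) (fun heq => ?_)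
    rw [heq] at hfr₀
    omega
  obtain ⟨f0, hf0v, hf0⟩ := SetLike.exists_of_lt hltv
  have hmod : v ⊓ (x m.succ ⊔ u) = u ⊔ v ⊓ x m.succ := by
    rw [← inf_sup_assoc_of_le _ huv, sup_comm]
  set fc : F → Submodule F H := fun c => u ⊔ span F {f0 + c • e} with hfc
  have hgc_not : ∀ c : F, f0 + c • e ∉ u := by
    intro c hin
    apply hf0
    have h1 : f0 = (f0 + c • e) - c • e := by rw [add_sub_cancel_right]
    rw [h1]
    exact Submodule.sub_mem _ (Submodule.mem_sup_left hin)
      (Submodule.mem_sup_right (Submodule.smul_mem _ c he1))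
  have hfc_r : ∀ c, finrank F ↥(fc c) = finrank F ↥u + 1 :=
    fun c => finrank_sup_span u (hgc_not c)
  have hfc_v : ∀ c, fc c ≤ v := fun c => sup_le huv
    ((Submodule.span_singleton_le_iff_mem _ _).2 (add_mem hf0v (Submodule.smul_mem _ c hev)))
  have hkey : ∀ c, fc c ⊓ x m.succ = u ⊓ x m.succ := by
    intro c
    refine le_antisymm ?_ (le_inf (inf_le_left.trans le_sup_left) inf_le_right)
    rintro g hg
    obtain ⟨hg1, hg2⟩ := Submodule.mem_inf.mp hg
    obtain ⟨p, hp, s, hs, rfl⟩ := Submodule.mem_sup.mp hg1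
    obtain ⟨t, rfl⟩ := Submodule.mem_span_singleton.mp hs
    rcases eq_or_ne t 0 with rfl | ht
    · rw [zero_smul, add_zero] at hg2 ⊢
      exact Submodule.mem_inf.mpr ⟨hp, hg2⟩
    · exfalso
      apply hf0
      rw [← hmod]
      refine Submodule.mem_inf.mpr ⟨hf0v, ?_⟩
      have h1 : f0 + c • e ∈ x m.succ ⊔ u := by
        have hsub : (p + t • (f0 + c • e)) - p ∈ x m.succ ⊔ u :=
          Submodule.sub_mem _ (Submodule.mem_sup_left hg2) (Submodule.mem_sup_right hp)
        rw [add_sub_cancel_left] at hsub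
        have h2 := Submodule.smul_mem _ t⁻¹ hsub
        rwa [smul_smul, inv_mul_cancel₀ ht, one_smul] at h2
      have h3 := Submodule.sub_mem _ h1 (Submodule.mem_sup_left (Submodule.smul_mem _ c hex))
      rwa [add_sub_cancel_right] at h3
  have hcov : ∀ c, MCovers x n (fc c) u ∧ MCovers x m v (fc c) := by
    intro c
    have hufc : u ≤ fc c := le_sup_left
    have hfr1 : finrank F ↥u + 1 = finrank F ↥(fc c) := (hfc_r c).symm
    have hfr2 : finrank F ↥(fc c) + 1 = finrank F ↥v := by
      have := hfc_r c; omega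
    obtain ⟨k, hk⟩ := exists_type x hmono hrank hdim hufc hfr1
    obtain ⟨k', hk'⟩ := exists_type x hmono hrank hdim (hfc_v c) hfr2
    have hdelta : ∀ i, ind k i + ind k' i = ind m i + ind n i := by
      intro i
      have := hk i; have := hk' i; have := hD i
      omega
    have hDfc : D x (fc c) m.succ = D x u m.succ := by rw [D, D, hkey c]
    have hkn : k = n ∧ k' = m := by
      rcases delta_lemma hdelta with ⟨h1, h2⟩ | ⟨h1, h2⟩
      · exfalso
        have := hk m.succ
        rw [h1, ind_self_succ] at this
        omega
      · exact ⟨h1, h2⟩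
    exact ⟨(mcovers_iff x hmono hrank).mpr ⟨hufc, hfr1, hkn.1 ▸ hk⟩,
      (mcovers_iff x hmono hrank).mpr ⟨hfc_v c, hfr2, hkn.2 ▸ hk'⟩⟩
  have hs1 : finrank F ↥(u ⊔ span F {e}) = finrank F ↥u + 1 := finrank_sup_span u heu
  have hf0ns : f0 ∉ u ⊔ span F {e} := by
    intro hmem
    apply hf0
    exact sup_le_sup_left ((Submodule.span_singleton_le_iff_mem _ _).2 he1) u hmem
  have hs2 : finrank F ↥(u ⊔ span F {e} ⊔ span F {f0}) = finrank F ↥u + 2 := by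
    rw [finrank_sup_span _ hf0ns, hs1]
  have hinj : Function.Injective fc := by
    intro c c' hcc
    by_contra hne
    have hpe : f0 + c • e ∈ fc c :=
      Submodule.mem_sup_right (Submodule.mem_span_singleton_self _)
    have hpe' : f0 + c' • e ∈ fc c := by
      rw [hcc]
      exact Submodule.mem_sup_right (Submodule.mem_span_singleton_self _)
    have hd : (c - c') • e ∈ fc c := by
      have h4 := Submodule.sub_mem _ hpe hpe'
      rwa [show f0 + c • e - (f0 + c' • e) = (c - c') • e by rw [sub_smul]; abel] at h4
    have hee : e ∈ fc c := by
      have h5 := Submodule.smul_mem _ (c - c')⁻¹ hd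
      rwa [smul_smul, inv_mul_cancel₀ (sub_ne_zero.2 hne), one_smul] at h5
    have hf0c : f0 ∈ fc c := by
      have h6 := Submodule.sub_mem _ hpe (Submodule.smul_mem _ c hee)
      rwa [add_sub_cancel_right] at h6
    have hle3 : u ⊔ span F {e} ⊔ span F {f0} ≤ fc c :=
      sup_le (sup_le le_sup_left ((Submodule.span_singleton_le_iff_mem _ _).2 hee))
        ((Submodule.span_singleton_le_iff_mem _ _).2 hf0c)
    have h7 := Submodule.finrank_mono hle3
    rw [hs2, hfc_r c] at h7
    omega
  refine ⟨fc, hcov, hinj, ?_⟩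
  rintro w ⟨hw1, hw2⟩
  rw [mcovers_iff x hmono hrank] at hw1 hw2
  obtain ⟨huw, hfrw, hDw⟩ := hw1
  obtain ⟨hwv, hfrv', hDv'⟩ := hw2
  have hve : u ⊔ span F {e} ⊔ span F {f0} = v := by
    apply Submodule.eq_of_le_of_finrank_le
    · exact sup_le (sup_le huv ((Submodule.span_singleton_le_iff_mem _ _).2 hev))
        ((Submodule.span_singleton_le_iff_mem _ _).2 hf0v)
    · omega
  have hltuw : u < w := by
    refine lt_of_le_of_ne huw (fun h => ?_)
    rw [h] at hfrw
    omega
  obtain ⟨g, hgw, hgu⟩ := SetLike.exists_of_lt hltuw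
  have hgv : g ∈ u ⊔ span F {e} ⊔ span F {f0} := hve ▸ hwv hgw
  obtain ⟨p1, hp1, s2, hs2', hgeq⟩ := Submodule.mem_sup.mp hgv
  obtain ⟨p, hp, s, hs, hpeq⟩ := Submodule.mem_sup.mp hp1
  obtain ⟨a, haeq⟩ := Submodule.mem_span_singleton.mp hs
  obtain ⟨b, hbeq⟩ := Submodule.mem_span_singleton.mp hs2'
  have hg : g = p + a • e + b • f0 := by rw [← hgeq, ← hpeq, haeq, hbeq]
  rcases eq_or_ne b 0 with rfl | hb
  · exfalso
    rw [zero_smul, add_zero] at hg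
    have ha : a ≠ 0 := by
      rintro rfl
      rw [zero_smul, add_zero] at hg
      exact hgu (hg ▸ hp)
    have hae : a • e ∈ w := by
      have h8 := Submodule.sub_mem _ hgw (huw hp)
      rwa [hg, add_sub_cancel_left] at h8
    have hew : e ∈ w := by
      have h9 := Submodule.smul_mem _ a⁻¹ hae
      rwa [smul_smul, inv_mul_cancel₀ ha, one_smul] at h9
    have hDwm : D x w m.succ = D x u m.succ := by
      have := hDw m.succ
      rw [ind_succ_of_not_le (not_le.2 hmn)] at this
      omega
    have hlt4 : u ⊓ x m.succ < w ⊓ x m.succ := by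
      refine lt_of_le_of_ne (inf_le_inf_right _ huw) (fun hcontra => ?_)
      have h10 : e ∈ w ⊓ x m.succ := Submodule.mem_inf.mpr ⟨hew, hex⟩
      rw [← hcontra] at h10
      exact heu (Submodule.mem_inf.mp h10).1
    have h11 := Submodule.finrank_lt_finrank_of_lt hlt4
    have e6 : finrank F ↥(w ⊓ x m.succ) = D x w m.succ := rfl
    omega
  · refine ⟨a * b⁻¹, ?_⟩
    have h6 : a • e + b • f0 ∈ w := by
      have h12 := Submodule.sub_mem _ hgw (huw hp)
      rwa [hg, show p + a • e + b • f0 - p = a • e + b • f0 by abel] at h12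
    have h5 : f0 + (a * b⁻¹) • e ∈ w := by
      have h13 := Submodule.smul_mem _ b⁻¹ h6
      rw [smul_add, smul_smul, smul_smul, inv_mul_cancel₀ hb, one_smul,
        mul_comm b⁻¹ a, add_comm] at h13
      exact h13
    have hle5 : fc (a * b⁻¹) ≤ w :=
      sup_le huw ((Submodule.span_singleton_le_iff_mem _ _).2 h5)
    apply Submodule.eq_of_le_of_finrank_le hle5
    rw [hfc_r]
    omega

omit hdim in
lemma up_eq_sup {m n : Fin N} (hmn : m ≠ n) {y z w : Submodule F H}
    (h1 : MCovers x m w y) (h2 : MCovers x n w z) : w = y ⊔ z := by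
  rw [mcovers_iff x hmono hrank] at h1 h2
  obtain ⟨hyw, hfry, hDy⟩ := h1
  obtain ⟨hzw, hfrz, hDz⟩ := h2
  have hyz : y ≠ z := by
    rintro rfl
    exact hmn (ind_inj (fun i => by have := hDy i; have := hDz i; omega))
  have hsupw : y ⊔ z ≤ w := sup_le hyw hzw
  have hylt : y < y ⊔ z := by
    refine lt_of_le_of_ne le_sup_left (fun h => ?_)
    apply hyz
    have hzy : z ≤ y := h ▸ le_sup_right
    exact (Submodule.eq_of_le_of_finrank_le hzy (by omega)).symm
  have h3 := Submodule.finrank_lt_finrank_of_lt hylt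
  have h4 := Submodule.finrank_mono hsupw
  exact (Submodule.eq_of_le_of_finrank_le hsupw (by omega)).symm

omit hdim in
lemma dn_eq_inf {m n : Fin N} (hmn : m ≠ n) {y z w : Submodule F H}
    (h1 : MCovers x n y w) (h2 : MCovers x m z w) : w = y ⊓ z := by
  rw [mcovers_iff x hmono hrank] at h1 h2
  obtain ⟨hwy, hfry, hDy⟩ := h1
  obtain ⟨hwz, hfrz, hDz⟩ := h2
  have hyz : y ≠ z := by
    rintro rfl
    exact hmn ((ind_inj (fun i => by have := hDy i; have := hDz i; omega)).symm)
  have hwinf : w ≤ y ⊓ z := le_inf hwy hwz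
  have hylt : y ⊓ z < y := by
    refine lt_of_le_of_ne inf_le_left (fun h => ?_)
    apply hyz
    have hyle : y ≤ z := h ▸ inf_le_right
    exact Submodule.eq_of_le_of_finrank_le hyle (by omega)
  have h3 := Submodule.finrank_lt_finrank_of_lt hylt
  exact Submodule.eq_of_le_of_finrank_le hwinf (by omega)

lemma up_iff_dn {m n : Fin N} (hmn : m ≠ n) (y z : Submodule F H) :
    (∃ w, MCovers x m w y ∧ MCovers x n w z) ↔
      (∃ w, MCovers x n y w ∧ MCovers x m z w) := by
  constructor
  · rintro ⟨w, hw1, hw2⟩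
    have hwsup := up_eq_sup x hmono hrank hmn hw1 hw2
    rw [mcovers_iff x hmono hrank] at hw1 hw2
    obtain ⟨hyw, hfry, hDy⟩ := hw1
    obtain ⟨hzw, hfrz, hDz⟩ := hw2
    have hsum := Submodule.finrank_sup_add_finrank_inf_eq y z
    rw [← hwsup] at hsum
    have hfr1 : finrank F ↥(y ⊓ z) + 1 = finrank F ↥y := by omega
    have hfr2 : finrank F ↥(y ⊓ z) + 1 = finrank F ↥z := by omega
    obtain ⟨a, ha⟩ := exists_type x hmono hrank hdim (inf_le_left : y ⊓ z ≤ y) hfr1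
    obtain ⟨b, hb⟩ := exists_type x hmono hrank hdim (inf_le_right : y ⊓ z ≤ z) hfr2
    have hdelta : ∀ i, ind a i + ind m i = ind b i + ind n i := by
      intro i
      have := ha i; have := hb i; have := hDy i; have := hDz i
      omega
    rcases delta_lemma hdelta with ⟨h1, h2⟩ | ⟨h1, h2⟩
    · exact absurd h2 hmn
    · refine ⟨y ⊓ z, (mcovers_iff x hmono hrank).mpr ⟨inf_le_left, hfr1, h1 ▸ ha⟩,
        (mcovers_iff x hmono hrank).mpr ⟨inf_le_right, hfr2, h2 ▸ hb⟩⟩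
  · rintro ⟨w, hw1, hw2⟩
    have hwinf := dn_eq_inf x hmono hrank hmn hw1 hw2
    rw [mcovers_iff x hmono hrank] at hw1 hw2
    obtain ⟨hwy, hfry, hDy⟩ := hw1
    obtain ⟨hwz, hfrz, hDz⟩ := hw2
    have hsum := Submodule.finrank_sup_add_finrank_inf_eq y z
    rw [← hwinf] at hsum
    have hfr1 : finrank F ↥y + 1 = finrank F ↥(y ⊔ z) := by omega
    have hfr2 : finrank F ↥z + 1 = finrank F ↥(y ⊔ z) := by omega
    obtain ⟨a, ha⟩ := exists_type x hmono hrank hdim (le_sup_left : y ≤ y ⊔ z) hfr1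
    obtain ⟨b, hb⟩ := exists_type x hmono hrank hdim (le_sup_right : z ≤ y ⊔ z) hfr2
    have hdelta : ∀ i, ind n i + ind a i = ind m i + ind b i := by
      intro i
      have := ha i; have := hb i; have := hDy i; have := hDz i
      omega
    rcases delta_lemma hdelta with ⟨h1, h2⟩ | ⟨h1, h2⟩
    · exact absurd h1.symm hmn
    · refine ⟨y ⊔ z, (mcovers_iff x hmono hrank).mpr ⟨le_sup_left, hfr1, h2.symm ▸ ha⟩,
        (mcovers_iff x hmono hrank).mpr ⟨le_sup_right, hfr2, h1 ▸ hb⟩⟩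


omit hmono hrank hdim in
lemma sum_ite_card [Fintype (Submodule F H)] (P Q : Submodule F H → Prop)
    [DecidablePred P] [DecidablePred Q] :
    (∑ w : Submodule F H, (if P w then (1:ℂ) else 0) * (if Q w then 1 else 0)) =
      ((Finset.univ.filter fun w => P w ∧ Q w).card : ℂ) := by
  rw [← Finset.sum_boole]
  refine Finset.sum_congr rfl fun w _ => ?_
  by_cases h1 : P w <;> by_cases h2 : Q w <;> simp [h1, h2]

omit hmono hrank hdim in
lemma filter_card_unique [Fintype (Submodule F H)] {P : Submodule F H → Prop}
    [DecidablePred P] (h : ∃! w, P w) : (Finset.univ.filter fun w => P w).card = 1 := by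
  obtain ⟨w, hw, huniq⟩ := h
  rw [Finset.card_eq_one]
  refine ⟨w, ?_⟩
  ext b
  simp only [Finset.mem_filter, Finset.mem_univ, true_and, Finset.mem_singleton]
  exact ⟨fun hb => huniq b hb, fun hb => hb ▸ hw⟩

omit hmono hrank hdim in
lemma filter_card_bij [Fintype F] [Fintype (Submodule F H)] {P : Submodule F H → Prop}
    [DecidablePred P] {f : F → Submodule F H} (hP : ∀ c, P (f c)) (hinj : Function.Injective f)
    (hsurj : ∀ w, P w → ∃ c, f c = w) :
    (Finset.univ.filter fun w => P w).card = Fintype.card F := by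
  classical
  have heq : (Finset.univ.filter fun w => P w) = Finset.univ.image f := by
    ext w
    simp only [Finset.mem_filter, Finset.mem_univ, true_and, Finset.mem_image]
    constructor
    · intro hw
      obtain ⟨c, hc⟩ := hsurj w hw
      exact ⟨c, hc⟩
    · rintro ⟨c, -, rfl⟩
      exact hP c
  rw [heq, Finset.card_image_of_injective _ hinj, Finset.card_univ]

omit hmono hrank hdim in
lemma filter_card_empty [Fintype (Submodule F H)] {P : Submodule F H → Prop}
    [DecidablePred P] (h : ∀ w, ¬ P w) : (Finset.univ.filter fun w => P w).card = 0 := by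
  rw [Finset.card_eq_zero, Finset.filter_eq_empty_iff]
  exact fun w _ => h w

end Stmt17Aux

open Stmt17Aux in
/-- `L_m² = R_m² = 0`; `q L_m L_n = L_n L_m` for `m < n`; `R_m R_n = q R_n R_m` for
`m < n`; and `L_m R_n = R_n L_m` for `m ≠ n`. -/
theorem stmt17 {F : Type*} [Field F] [Fintype F] {H : Type*} [AddCommGroup H] [Module F H]
    [FiniteDimensional F H] [Fintype (Submodule F H)] {N : ℕ}
    (hN : 1 ≤ N) (hdim : Module.finrank F H = N)
    (x : Fin (N + 1) → Submodule F H) (hrank : ∀ i, Module.finrank F ↥(x i) = (i : ℕ))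
    (hmono : StrictMono x) (m n : Fin N) :
    Lmat x m * Lmat x m = 0 ∧ Rmat x m * Rmat x m = 0 ∧
      (m < n → (Fintype.card F : ℂ) • (Lmat x m * Lmat x n) = Lmat x n * Lmat x m) ∧
      (m < n → Rmat x m * Rmat x n = (Fintype.card F : ℂ) • (Rmat x n * Rmat x m)) ∧
      (m ≠ n → Lmat x m * Rmat x n = Rmat x n * Lmat x m) := by
  classical
  refine ⟨?_, ?_, ?_, ?_, ?_⟩
  · -- L_m² = 0
    ext y z
    rw [Matrix.mul_apply, Matrix.zero_apply]
    apply Finset.sum_eq_zero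
    intro w _
    simp only [Lmat, Matrix.of_apply]
    by_cases h1 : MCovers x m w y
    · by_cases h2 : MCovers x m z w
      · exfalso
        have e1 := h1.2 m
        have e2 := h2.2 m
        rw [if_pos rfl] at e1 e2
        have l1 := loc_le_one x hmono hrank z m
        omega
      · rw [if_neg h2, mul_zero]
    · rw [if_neg h1, zero_mul]
  · -- R_m² = 0
    ext y z
    rw [Matrix.mul_apply, Matrix.zero_apply]
    apply Finset.sum_eq_zero
    intro w _
    simp only [Rmat, Matrix.of_apply]
    by_cases h1 : MCovers x m y w
    · by_cases h2 : MCovers x m w z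
      · exfalso
        have e1 := h1.2 m
        have e2 := h2.2 m
        rw [if_pos rfl] at e1 e2
        have l1 := loc_le_one x hmono hrank y m
        omega
      · rw [if_neg h2, mul_zero]
    · rw [if_neg h1, zero_mul]
  · -- q L_m L_n = L_n L_m
    intro hmn
    ext y z
    rw [Matrix.smul_apply, Matrix.mul_apply, Matrix.mul_apply]
    simp only [Lmat, Matrix.of_apply]
    rw [sum_ite_card (fun w => MCovers x m w y) (fun w => MCovers x n z w),
      sum_ite_card (fun w => MCovers x n w y) (fun w => MCovers x m z w), smul_eq_mul]
    by_cases hcore : Core x m n y z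
    · obtain ⟨f, hf1, hf2, hf3⟩ := core_count x hmono hrank hdim hmn hcore
      rw [filter_card_unique (core_unique x hmono hrank hdim hmn hcore),
        filter_card_bij (fun c => hf1 c) hf2 hf3]
      simp
    · rw [filter_card_empty (P := fun w => MCovers x m w y ∧ MCovers x n z w)
          (fun w hw => hcore (chain_core x hmono hrank hw.1 hw.2)),
        filter_card_empty (P := fun w => MCovers x n w y ∧ MCovers x m z w)
          (fun w hw => hcore (core_comm x (chain_core x hmono hrank hw.1 hw.2)))]
      simp
  · -- R_m R_n = q R_n R_m
    intro hmn
    ext y z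
    rw [Matrix.smul_apply, Matrix.mul_apply, Matrix.mul_apply]
    simp only [Rmat, Matrix.of_apply]
    rw [sum_ite_card (fun w => MCovers x m y w) (fun w => MCovers x n w z),
      sum_ite_card (fun w => MCovers x n y w) (fun w => MCovers x m w z), smul_eq_mul]
    have hflip1 : (Finset.univ.filter fun w => MCovers x m y w ∧ MCovers x n w z) =
        (Finset.univ.filter fun w => MCovers x n w z ∧ MCovers x m y w) := by
      apply Finset.filter_congr
      intro w _
      exact and_comm
    have hflip2 : (Finset.univ.filter fun w => MCovers x n y w ∧ MCovers x m w z) =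
        (Finset.univ.filter fun w => MCovers x m w z ∧ MCovers x n y w) := by
      apply Finset.filter_congr
      intro w _
      exact and_comm
    rw [hflip1, hflip2]
    by_cases hcore : Core x m n z y
    · obtain ⟨f, hf1, hf2, hf3⟩ := core_count x hmono hrank hdim hmn hcore
      rw [filter_card_unique (core_unique x hmono hrank hdim hmn hcore),
        filter_card_bij (fun c => hf1 c) hf2 hf3]
      simp
    · rw [filter_card_empty (P := fun w => MCovers x n w z ∧ MCovers x m y w)
          (fun w hw => hcore (core_comm x (chain_core x hmono hrank hw.1 hw.2))),
        filter_card_empty (P := fun w => MCovers x m w z ∧ MCovers x n y w)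
          (fun w hw => hcore (chain_core x hmono hrank hw.1 hw.2))]
      simp
  · -- L_m R_n = R_n L_m
    intro hmn
    ext y z
    rw [Matrix.mul_apply, Matrix.mul_apply]
    simp only [Lmat, Rmat, Matrix.of_apply]
    rw [sum_ite_card (fun w => MCovers x m w y) (fun w => MCovers x n w z),
      sum_ite_card (fun w => MCovers x n y w) (fun w => MCovers x m z w)]
    by_cases hex : ∃ w, MCovers x m w y ∧ MCovers x n w z
    · obtain ⟨w1, hw1⟩ := hex
      obtain ⟨w2, hw2⟩ := (up_iff_dn x hmono hrank hdim hmn y z).mp ⟨w1, hw1⟩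
      rw [filter_card_unique ⟨w1, hw1, fun b hb =>
          (up_eq_sup x hmono hrank hmn hb.1 hb.2).trans
            (up_eq_sup x hmono hrank hmn hw1.1 hw1.2).symm⟩,
        filter_card_unique ⟨w2, hw2, fun b hb =>
          (dn_eq_inf x hmono hrank hmn hb.1 hb.2).trans
            (dn_eq_inf x hmono hrank hmn hw2.1 hw2.2).symm⟩]
    · have hex2 : ¬ ∃ w, MCovers x n y w ∧ MCovers x m z w :=
        fun h => hex ((up_iff_dn x hmono hrank hdim hmn y z).mpr h)
      rw [filter_card_empty (P := fun w => MCovers x m w y ∧ MCovers x n w z)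
          (fun w hw => hex ⟨w, hw⟩),
        filter_card_empty (P := fun w => MCovers x n y w ∧ MCovers x m z w)
          (fun w hw => hex2 ⟨w, hw⟩)]
end
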